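/- Let K be a field of characteristic 2. Then K[x₁,x₂,x₃]^{A₃} = K[s₁,s₂,s₃] ⊕ b₃·K[s₁,s₂,s₃] as a K[s₁,s₂,s₃]-module, where b₃ = x₁x₂² + x₂x₃² + x₃x₁², and the generators satisfy b₃² + b₃s₁s₂ + s₂³ + b₃s₃ + s₁³s₃ + s₃² = 0. -/

import Mathlib

open MvPolynomial
set_option linter.unusedSectionVars false

noncomputable abbrev es1 (K : Type) [Field K] : MvPolynomial (Fin 3) K :=
  X 0 + X 1 + X 2
noncomputable abbrev es2 (K : Type) [Field K] : MvPolynomial (Fin 3) K :=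
  X 0 * X 1 + X 1 * X 2 + X 2 * X 0
noncomputable abbrev es3 (K : Type) [Field K] : MvPolynomial (Fin 3) K :=
  X 0 * X 1 * X 2
noncomputable abbrev b3 (K : Type) [Field K] : MvPolynomial (Fin 3) K :=
  X 0 * X 1 ^ 2 + X 1 * X 2 ^ 2 + X 2 * X 0 ^ 2

/- Auxiliary definitions -/

def cyc : Equiv.Perm (Fin 3) := ⟨![1,2,0], ![2,0,1], by decide, by decide⟩
def cyc2 : Equiv.Perm (Fin 3) := ⟨![2,0,1], ![1,2,0], by decide, by decide⟩
def swp01 : Equiv.Perm (Fin 3) := ⟨![1,0,2], ![1,0,2], by decide, by decide⟩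
def swp12 : Equiv.Perm (Fin 3) := ⟨![0,2,1], ![0,2,1], by decide, by decide⟩
def swp02 : Equiv.Perm (Fin 3) := ⟨![2,1,0], ![2,1,0], by decide, by decide⟩

noncomputable abbrev dd (K : Type) [Field K] : MvPolynomial (Fin 3) K :=
  (X 0 - X 1) * (X 1 - X 2) * (X 0 - X 2)

section Aux

variable (K : Type) [Field K] [CharP K 2]

lemma h2R : (2 : MvPolynomial (Fin 3) K) = 0 := by
  rw [show (2 : MvPolynomial (Fin 3) K) = algebraMap K _ 2 from (map_ofNat _ 2).symm,
    show (2:K) = 0 by exact_mod_cast CharP.cast_eq_zero K 2, map_zero]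

/- elementary symmetric polynomials -/

lemma es1_eq : es1 K = esymm (Fin 3) K 1 := by
  rw [esymm_one, Fin.sum_univ_three]

lemma es2_eq : es2 K = esymm (Fin 3) K 2 := by
  have h : (Finset.powersetCard 2 (Finset.univ : Finset (Fin 3))) = {{0,1},{0,2},{1,2}} := by
    decide
  rw [esymm, h]
  rw [show ({{0,1},{0,2},{1,2}} : Finset (Finset (Fin 3)))
      = insert {0,1} (insert {0,2} {{1,2}}) from rfl]
  rw [Finset.sum_insert (by decide), Finset.sum_insert (by decide), Finset.sum_singleton]
  rw [show ({0,1} : Finset (Fin 3)) = insert 0 {1} from rfl,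
    Finset.prod_insert (by decide), Finset.prod_singleton]
  rw [show ({0,2} : Finset (Fin 3)) = insert 0 {2} from rfl,
    Finset.prod_insert (by decide), Finset.prod_singleton]
  rw [show ({1,2} : Finset (Fin 3)) = insert 1 {2} from rfl,
    Finset.prod_insert (by decide), Finset.prod_singleton]
  ring

lemma es3_eq : es3 K = esymm (Fin 3) K 3 := by
  have h : (Finset.powersetCard 3 (Finset.univ : Finset (Fin 3))) = {{0,1,2}} := by decide
  rw [esymm, h, Finset.sum_singleton,
    show ({0,1,2} : Finset (Fin 3)) = insert 0 (insert 1 {2}) from rfl,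
    Finset.prod_insert (by decide), Finset.prod_insert (by decide), Finset.prod_singleton]
  ring

lemma vec_eq : ![es1 K, es2 K, es3 K] = fun i : Fin 3 => esymm (Fin 3) K (i + 1) := by
  funext i
  fin_cases i
  · exact es1_eq K
  · exact es2_eq K
  · exact es3_eq K

lemma aeval_es_eq (f : MvPolynomial (Fin 3) K) :
    aeval ![es1 K, es2 K, es3 K] f = ((esymmAlgHom (Fin 3) K 3) f).val := by
  rw [esymmAlgHom_apply, vec_eq]

lemma aeval_es_injective : Function.Injective
    (aeval ![es1 K, es2 K, es3 K] : MvPolynomial (Fin 3) K → MvPolynomial (Fin 3) K) := by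
  intro a b hab
  refine esymmAlgHom_fin_injective (R := K) (n := 3) (m := 3) (le_refl 3) ?_
  apply Subtype.ext
  rw [← aeval_es_eq, ← aeval_es_eq]
  exact hab

lemma aeval_es_surjective (q : MvPolynomial (Fin 3) K) (hq : q.IsSymmetric) :
    ∃ f : MvPolynomial (Fin 3) K, aeval ![es1 K, es2 K, es3 K] f = q := by
  obtain ⟨f, hf⟩ := (esymmAlgHom_fin_bijective K 3).2 ⟨q, hq⟩
  exact ⟨f, by rw [aeval_es_eq, hf]⟩

/- rename computations -/

lemma rc_es1 : rename ⇑cyc (es1 K) = es1 K := by simp [cyc]; ring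
lemma rc_es2 : rename ⇑cyc (es2 K) = es2 K := by simp [cyc]; ring
lemma rc_es3 : rename ⇑cyc (es3 K) = es3 K := by simp [cyc]; ring
lemma rc_b3 : rename ⇑cyc (b3 K) = b3 K := by simp [cyc]; ring
lemma rc_dd : rename ⇑cyc (dd K) = dd K := by simp [cyc]; ring
lemma rc2_es1 : rename ⇑cyc2 (es1 K) = es1 K := by simp [cyc2]; ring
lemma rc2_es2 : rename ⇑cyc2 (es2 K) = es2 K := by simp [cyc2]; ring
lemma rc2_es3 : rename ⇑cyc2 (es3 K) = es3 K := by simp [cyc2]; ring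
lemma rc2_b3 : rename ⇑cyc2 (b3 K) = b3 K := by simp [cyc2]; ring
lemma rc2_dd : rename ⇑cyc2 (dd K) = dd K := by simp [cyc2]; ring
lemma rs01_es1 : rename ⇑swp01 (es1 K) = es1 K := by simp [swp01]; ring
lemma rs01_es2 : rename ⇑swp01 (es2 K) = es2 K := by simp [swp01]; ring
lemma rs01_es3 : rename ⇑swp01 (es3 K) = es3 K := by simp [swp01]; ring
lemma rs01_b3 : rename ⇑swp01 (b3 K) = b3 K + dd K := by simp [swp01]; ring
lemma rs01_dd : rename ⇑swp01 (dd K) = dd K := by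
  simp [swp01]; linear_combination (-(dd K)) * h2R K
lemma rs12_b3 : rename ⇑swp12 (b3 K) = b3 K + dd K := by simp [swp12]; ring
lemma rs12_dd : rename ⇑swp12 (dd K) = dd K := by
  simp [swp12]; linear_combination (-(dd K)) * h2R K
lemma rs02_b3 : rename ⇑swp02 (b3 K) = b3 K + dd K := by simp [swp02]; ring
lemma rs02_dd : rename ⇑swp02 (dd K) = dd K := by
  simp [swp02]; linear_combination (-(dd K)) * h2R K

lemma rid_dd : rename ⇑(1 : Equiv.Perm (Fin 3)) (dd K) = dd K := by
  rw [Equiv.Perm.coe_one, rename_id, AlgHom.id_apply]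

/- invariance of aeval at the e.s.p. under any rename that fixes es1, es2, es3 -/
lemma rename_aeval_es (π : Equiv.Perm (Fin 3))
    (h1 : rename ⇑π (es1 K) = es1 K) (h2 : rename ⇑π (es2 K) = es2 K)
    (h3 : rename ⇑π (es3 K) = es3 K) (f : MvPolynomial (Fin 3) K) :
    rename ⇑π (aeval ![es1 K, es2 K, es3 K] f) = aeval ![es1 K, es2 K, es3 K] f := by
  have hv : (fun i => (rename ⇑π) (![es1 K, es2 K, es3 K] i)) = ![es1 K, es2 K, es3 K] := by
    funext i
    fin_cases i
    · exact h1
    · exact h2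
    · exact h3
  rw [comp_aeval_apply, hv]

/- divisibility lemma -/
lemma dvd_sub_rename (a b : Fin 3) (π : Equiv.Perm (Fin 3))
    (h : ∀ i : Fin 3, (X (π i) - X i : MvPolynomial (Fin 3) K) ∈
      Ideal.span {(X a - X b : MvPolynomial (Fin 3) K)}) (p : MvPolynomial (Fin 3) K) :
    (X a - X b : MvPolynomial (Fin 3) K) ∣ rename ⇑π p - p := by
  rw [← Ideal.mem_span_singleton, ← Ideal.Quotient.eq_zero_iff_mem, map_sub, sub_eq_zero]
  have key : (Ideal.Quotient.mk (Ideal.span {(X a - X b : MvPolynomial (Fin 3) K)})).comp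
      (rename ⇑π : MvPolynomial (Fin 3) K →ₐ[K] MvPolynomial (Fin 3) K).toRingHom =
      Ideal.Quotient.mk _ := by
    apply MvPolynomial.ringHom_ext
    · intro r; simp
    · intro i
      simp only [RingHom.comp_apply, AlgHom.toRingHom_eq_coe, RingHom.coe_coe, rename_X]
      rw [Ideal.Quotient.eq]
      exact h i
  exact RingHom.congr_fun key p

lemma nassoc (u v : MvPolynomial (Fin 3) K) (x : Fin 3 → K) (hu : eval x u = 0)
    (hv : eval x v ≠ 0) : ¬ Associated u v := by
  rintro ⟨c, hc⟩
  exact hv (by rw [← hc, map_mul, hu, zero_mul])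

lemma prime01 : Prime ((X 0 - X 1 : MvPolynomial (Fin 3) K)) := by
  rw [← MulEquiv.prime_iff (finSuccEquiv K 2).toRingEquiv.toMulEquiv]
  have h : (finSuccEquiv K 2).toRingEquiv.toMulEquiv ((X 0 - X 1 : MvPolynomial (Fin 3) K))
      = Polynomial.X - Polynomial.C (X 0) := by
    show (finSuccEquiv K 2) _ = _
    rw [map_sub, show (1 : Fin 3) = Fin.succ 0 from rfl, finSuccEquiv_X_zero, finSuccEquiv_X_succ]
  rw [h]
  exact Polynomial.prime_X_sub_C _

lemma prime12 : Prime ((X 1 - X 2 : MvPolynomial (Fin 3) K)) := by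
  have h := (MulEquiv.prime_iff
    (renameEquiv K (Equiv.permCongr (Equiv.refl (Fin 3)) cyc)).toRingEquiv.toMulEquiv).mpr
    (prime01 K)
  have e : (renameEquiv K (Equiv.permCongr (Equiv.refl (Fin 3)) cyc)).toRingEquiv.toMulEquiv
      ((X 0 - X 1 : MvPolynomial (Fin 3) K)) = X 1 - X 2 := by
    show rename _ _ = _
    rw [map_sub, rename_X, rename_X]
    norm_num [cyc]
  rwa [e] at h

lemma prime02 : Prime ((X 0 - X 2 : MvPolynomial (Fin 3) K)) := by
  have h := (MulEquiv.prime_iff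
    (renameEquiv K (Equiv.permCongr (Equiv.refl (Fin 3)) swp12)).toRingEquiv.toMulEquiv).mpr
    (prime01 K)
  have e : (renameEquiv K (Equiv.permCongr (Equiv.refl (Fin 3)) swp12)).toRingEquiv.toMulEquiv
      ((X 0 - X 1 : MvPolynomial (Fin 3) K)) = X 0 - X 2 := by
    show rename _ _ = _
    rw [map_sub, rename_X, rename_X]
    norm_num [swp12]
  rwa [e] at h

lemma dd_ne_zero : dd K ≠ 0 := by
  have h : ∀ a b : Fin 3, a ≠ b → (X a - X b : MvPolynomial (Fin 3) K) ≠ 0 := by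
    intro a b hab
    exact sub_ne_zero.mpr (fun h => hab (MvPolynomial.X_injective h))
  exact mul_ne_zero (mul_ne_zero (h 0 1 (by decide)) (h 1 2 (by decide))) (h 0 2 (by decide))

end Aux

lemma perm_cases : ∀ π : Equiv.Perm (Fin 3),
    π = 1 ∨ π = cyc ∨ π = cyc2 ∨ π = swp01 ∨ π = swp12 ∨ π = swp02 := by decide

lemma sign_cases : ∀ σ : Equiv.Perm (Fin 3), Equiv.Perm.sign σ = 1 →
    σ = 1 ∨ σ = cyc ∨ σ = cyc2 := by decide

/-- in characteristic 2, K[x₁,x₂,x₃]^{A₃} = K[s₁,s₂,s₃] ⊕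
b₃·K[s₁,s₂,s₃] (every A₃-invariant polynomial is uniquely of the form
f(s₁,s₂,s₃) + b₃·g(s₁,s₂,s₃)), and b₃² + b₃s₁s₂ + s₂³ + b₃s₃ + s₁³s₃ + s₃² = 0. -/
theorem stmt_15 (K : Type) [Field K] [CharP K 2] :
    (∀ p : MvPolynomial (Fin 3) K,
      (∀ σ : Equiv.Perm (Fin 3), Equiv.Perm.sign σ = 1 → rename (⇑σ) p = p) ↔
      ∃ f g : MvPolynomial (Fin 3) K,
        p = aeval ![es1 K, es2 K, es3 K] f + b3 K * aeval ![es1 K, es2 K, es3 K] g) ∧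
    (∀ f g f' g' : MvPolynomial (Fin 3) K,
      aeval ![es1 K, es2 K, es3 K] f + b3 K * aeval ![es1 K, es2 K, es3 K] g =
        aeval ![es1 K, es2 K, es3 K] f' + b3 K * aeval ![es1 K, es2 K, es3 K] g' →
      f = f' ∧ g = g') ∧
    b3 K ^ 2 + b3 K * es1 K * es2 K + es2 K ^ 3 + b3 K * es3 K
      + es1 K ^ 3 * es3 K + es3 K ^ 2 = 0 := by
  refine ⟨?_, ?_, ?_⟩
  · intro p
    constructor
    · intro hp
      have hp1 : rename ⇑cyc p = p := hp cyc (by decide)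
      have hp2 : rename ⇑cyc2 p = p := hp cyc2 (by decide)
      have hQ12 : rename ⇑swp12 p = rename ⇑swp01 p := by
        rw [show ⇑swp12 = ⇑swp01 ∘ ⇑cyc from by decide, ← rename_rename, hp1]
      have hQ02 : rename ⇑swp02 p = rename ⇑swp01 p := by
        rw [show ⇑swp02 = ⇑swp01 ∘ ⇑cyc2 from by decide, ← rename_rename, hp2]
      have hQc : rename ⇑cyc (rename ⇑swp01 p) = rename ⇑swp01 p := by
        rw [rename_rename, show ⇑cyc ∘ ⇑swp01 = ⇑swp01 ∘ ⇑cyc2 from by decide,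
          ← rename_rename, hp2]
      have hQc2 : rename ⇑cyc2 (rename ⇑swp01 p) = rename ⇑swp01 p := by
        rw [rename_rename, show ⇑cyc2 ∘ ⇑swp01 = ⇑swp01 ∘ ⇑cyc from by decide,
          ← rename_rename, hp1]
      have hQ01 : rename ⇑swp01 (rename ⇑swp01 p) = p := by
        rw [rename_rename, show ⇑swp01 ∘ ⇑swp01 = id from by decide, rename_id, AlgHom.id_apply]
      have hq12Q : rename ⇑swp12 (rename ⇑swp01 p) = p := by
        rw [rename_rename, show ⇑swp12 ∘ ⇑swp01 = ⇑cyc2 from by decide, hp2]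
      have hq02Q : rename ⇑swp02 (rename ⇑swp01 p) = p := by
        rw [rename_rename, show ⇑swp02 ∘ ⇑swp01 = ⇑cyc from by decide, hp1]
      have hqsym : ∀ π : Equiv.Perm (Fin 3),
          rename ⇑π (p + rename ⇑swp01 p) = p + rename ⇑swp01 p := by
        intro π
        rcases perm_cases π with rfl|rfl|rfl|rfl|rfl|rfl
        · rw [Equiv.Perm.coe_one, rename_id, AlgHom.id_apply]
        · rw [map_add, hp1, hQc]
        · rw [map_add, hp2, hQc2]
        · rw [map_add, hQ01, add_comm]
        · rw [map_add, hQ12, hq12Q, add_comm]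
        · rw [map_add, hQ02, hq02Q, add_comm]
      have h01 : (X 0 - X 1 : MvPolynomial (Fin 3) K) ∣ p + rename ⇑swp01 p := by
        have hd := dvd_sub_rename K 0 1 swp01 (by
          intro i; fin_cases i <;> rw [Ideal.mem_span_singleton]
          · exact ⟨-1, by simp [swp01]; try ring⟩
          · exact ⟨1, by simp [swp01]; try ring⟩
          · exact ⟨0, by simp [swp01]; try ring⟩) p
        have he : rename ⇑swp01 p - p = p + rename ⇑swp01 p := by
          linear_combination (-p) * h2R K
        rwa [he] at hd
      have h12 : (X 1 - X 2 : MvPolynomial (Fin 3) K) ∣ p + rename ⇑swp01 p := by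
        have hd := dvd_sub_rename K 1 2 swp12 (by
          intro i; fin_cases i <;> rw [Ideal.mem_span_singleton]
          · exact ⟨0, by simp [swp12]; try ring⟩
          · exact ⟨-1, by simp [swp12]; try ring⟩
          · exact ⟨1, by simp [swp12]; try ring⟩) p
        have he : rename ⇑swp12 p - p = p + rename ⇑swp01 p := by
          rw [hQ12]; linear_combination (-p) * h2R K
        rwa [he] at hd
      have h02 : (X 0 - X 2 : MvPolynomial (Fin 3) K) ∣ p + rename ⇑swp01 p := by
        have hd := dvd_sub_rename K 0 2 swp02 (by
          intro i; fin_cases i <;> rw [Ideal.mem_span_singleton]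
          · exact ⟨-1, by simp [swp02]; try ring⟩
          · exact ⟨0, by simp [swp02]; try ring⟩
          · exact ⟨1, by simp [swp02]; try ring⟩) p
        have he : rename ⇑swp02 p - p = p + rename ⇑swp01 p := by
          rw [hQ02]; linear_combination (-p) * h2R K
        rwa [he] at hd
      obtain ⟨q1, hq1⟩ := h01
      have h12' : (X 1 - X 2 : MvPolynomial (Fin 3) K) ∣ (X 0 - X 1) * q1 := hq1 ▸ h12
      rcases (prime12 K).2.2 _ _ h12' with hbad | ⟨q2, hq2⟩
      · exact absurd ((prime12 K).associated_of_dvd (prime01 K) hbad)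
          (nassoc K _ _ ![0,1,1] (by simp) (by simp))
      have h02' : (X 0 - X 2 : MvPolynomial (Fin 3) K) ∣ (X 0 - X 1) * ((X 1 - X 2) * q2) := by
        rw [← hq2, ← hq1]; exact h02
      rcases (prime02 K).2.2 _ _ h02' with hbad | h02''
      · exact absurd ((prime02 K).associated_of_dvd (prime01 K) hbad)
          (nassoc K _ _ ![0,1,0] (by simp) (by simp))
      rcases (prime02 K).2.2 _ _ h02'' with hbad | ⟨g0, hg0⟩
      · exact absurd ((prime02 K).associated_of_dvd (prime12 K) hbad)
          (nassoc K _ _ ![0,1,0] (by simp) (by simp))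
      have hfac : p + rename ⇑swp01 p = dd K * g0 := by
        rw [hq1, hq2, hg0]; ring
      have hddsym : ∀ π : Equiv.Perm (Fin 3), rename ⇑π (dd K) = dd K := by
        intro π; rcases perm_cases π with rfl|rfl|rfl|rfl|rfl|rfl
        exacts [rid_dd K, rc_dd K, rc2_dd K, rs01_dd K, rs12_dd K, rs02_dd K]
      have hg0sym : MvPolynomial.IsSymmetric g0 := by
        intro π
        apply mul_left_cancel₀ (dd_ne_zero K)
        calc dd K * rename ⇑π g0 = rename ⇑π (dd K) * rename ⇑π g0 := by rw [hddsym]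
          _ = rename ⇑π (dd K * g0) := (map_mul _ _ _).symm
          _ = rename ⇑π (p + rename ⇑swp01 p) := by rw [← hfac]
          _ = p + rename ⇑swp01 p := hqsym π
          _ = dd K * g0 := hfac
      have hf0sym : MvPolynomial.IsSymmetric (p + b3 K * g0) := by
        intro π
        rcases perm_cases π with rfl|rfl|rfl|rfl|rfl|rfl
        · rw [Equiv.Perm.coe_one, rename_id, AlgHom.id_apply]
        · rw [map_add, map_mul, hp1, rc_b3, hg0sym cyc]
        · rw [map_add, map_mul, hp2, rc2_b3, hg0sym cyc2]
        · rw [map_add, map_mul, rs01_b3, hg0sym swp01]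
          linear_combination hfac + (dd K * g0 - p) * h2R K
        · rw [map_add, map_mul, rs12_b3, hg0sym swp12, hQ12]
          linear_combination hfac + (dd K * g0 - p) * h2R K
        · rw [map_add, map_mul, rs02_b3, hg0sym swp02, hQ02]
          linear_combination hfac + (dd K * g0 - p) * h2R K
      obtain ⟨G, hG⟩ := aeval_es_surjective K g0 hg0sym
      obtain ⟨F, hF⟩ := aeval_es_surjective K _ hf0sym
      refine ⟨F, G, ?_⟩
      rw [hF, hG]
      linear_combination (-(b3 K * g0)) * h2R K
    · rintro ⟨f, g, rfl⟩
      intro σ hσ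
      rcases sign_cases σ hσ with rfl | rfl | rfl
      · rw [Equiv.Perm.coe_one, rename_id, AlgHom.id_apply]
      · rw [map_add, map_mul, rename_aeval_es K cyc (rc_es1 K) (rc_es2 K) (rc_es3 K) f,
          rename_aeval_es K cyc (rc_es1 K) (rc_es2 K) (rc_es3 K) g, rc_b3]
      · rw [map_add, map_mul, rename_aeval_es K cyc2 (rc2_es1 K) (rc2_es2 K) (rc2_es3 K) f,
          rename_aeval_es K cyc2 (rc2_es1 K) (rc2_es2 K) (rc2_es3 K) g, rc2_b3]
  · intro f g f' g' heq
    have hA : aeval ![es1 K, es2 K, es3 K] (f - f')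
        = b3 K * aeval ![es1 K, es2 K, es3 K] (g' - g) := by
      rw [map_sub, map_sub]; linear_combination heq
    have hA' : aeval ![es1 K, es2 K, es3 K] (f - f')
        = (b3 K + dd K) * aeval ![es1 K, es2 K, es3 K] (g' - g) := by
      have h := congrArg (rename ⇑swp01) hA
      rwa [map_mul, rs01_b3,
        rename_aeval_es K swp01 (rs01_es1 K) (rs01_es2 K) (rs01_es3 K) (f - f'),
        rename_aeval_es K swp01 (rs01_es1 K) (rs01_es2 K) (rs01_es3 K) (g' - g)] at h
    have hW : dd K * aeval ![es1 K, es2 K, es3 K] (g' - g) = 0 := by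
      linear_combination hA - hA'
    have hW0 : aeval ![es1 K, es2 K, es3 K] (g' - g) = 0 := by
      rcases mul_eq_zero.mp hW with h | h
      · exact absurd h (dd_ne_zero K)
      · exact h
    have hg : g' - g = 0 := aeval_es_injective K
      (show _ = aeval ![es1 K, es2 K, es3 K] 0 by rw [hW0, map_zero])
    have hf : f - f' = 0 := aeval_es_injective K
      (show _ = aeval ![es1 K, es2 K, es3 K] 0 by rw [hA, hW0, mul_zero, map_zero])
    exact ⟨sub_eq_zero.mp hf, (sub_eq_zero.mp hg).symm⟩
  · linear_combination (X 1^2*X 2^4 + X 1^3*X 2^3 + X 0*X 1*X 2^4 + 5*X 0*X 1^2*X 2^3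
      + 5*X 0*X 1^3*X 2^2 + X 0*X 1^4*X 2 + 5*X 0^2*X 1*X 2^3 + 8*X 0^2*X 1^2*X 2^2
      + 5*X 0^2*X 1^3*X 2 + X 0^2*X 1^4 + X 0^3*X 2^3 + 5*X 0^3*X 1*X 2^2
      + 5*X 0^3*X 1^2*X 2 + X 0^3*X 1^3 + X 0^4*X 2^2
      + X 0^4*X 1*X 2 : MvPolynomial (Fin 3) K) * h2R K
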